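/- arXiv:0905.1271 — 5 statements merged into one kernel-verified Lean document; each statement's English description precedes it below -/
import Mathlib

section
/- For every positive integer n ≥ 1, q(n) is not a power of 2 if and only if there exist positive integers s and t with 2^s < t < 2^(s+1), such that 2^s divides n and t does not divide n. -/
/-- `q n` is the least integer `m ≥ 2` that does not divide `n`. -/
noncomputable def leastNonDivisor (n : ℕ) : ℕ := sInf {m : ℕ | 2 ≤ m ∧ ¬ m ∣ n}

theorem leastNonDivisor_not_pow_two_iff (n : ℕ) (hn : 1 ≤ n) :
    (¬ ∃ k : ℕ, 1 ≤ k ∧ leastNonDivisor n = 2 ^ k) ↔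
      ∃ s t : ℕ, 1 ≤ s ∧ 1 ≤ t ∧ 2 ^ s < t ∧ t < 2 ^ (s + 1) ∧ 2 ^ s ∣ n ∧ ¬ t ∣ n := by
  set q := leastNonDivisor n with hqdef
  have hne : ∃ m, m ∈ {m : ℕ | 2 ≤ m ∧ ¬ m ∣ n} := by
    refine ⟨n + 1, ?_, ?_⟩
    · omega
    · intro h
      have := Nat.le_of_dvd (by omega) h
      omega
  have hq : 2 ≤ q ∧ ¬ q ∣ n := Nat.sInf_mem hne
  have hmin : ∀ m, 2 ≤ m → m < q → m ∣ n := by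
    intro m h2 hlt
    by_contra hdvd
    exact Nat.notMem_of_lt_sInf hlt ⟨h2, hdvd⟩
  constructor
  · intro hnp
    set s := Nat.log 2 q with hs
    have hq0 : q ≠ 0 := by omega
    have hle : 2 ^ s ≤ q := Nat.pow_log_le_self 2 hq0
    have hlt : q < 2 ^ (s + 1) := Nat.lt_pow_succ_log_self (by norm_num) q
    have hs1 : 1 ≤ s := (Nat.le_log_iff_pow_le (by norm_num) hq0).mpr (by simpa using hq.1)
    have hne' : 2 ^ s ≠ q := by
      intro h
      exact hnp ⟨s, hs1, h.symm⟩
    have hltq : 2 ^ s < q := lt_of_le_of_ne hle hne'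
    refine ⟨s, q, hs1, by omega, hltq, hlt, ?_, hq.2⟩
    exact hmin _ (by have := Nat.one_lt_two_pow (n := s) (by omega); omega) hltq
  · rintro ⟨s, t, hs1, ht1, hst, hts, hsn, htn⟩ ⟨k, hk1, hqk⟩
    have hqt : q ≤ t := Nat.sInf_le ⟨by omega, htn⟩
    have hks : k ≤ s := by
      by_contra h
      have : 2 ^ (s + 1) ≤ 2 ^ k := Nat.pow_le_pow_right (by norm_num) (by omega)
      omega
    have : (2 : ℕ) ^ k ∣ n := dvd_trans (pow_dvd_pow 2 hks) hsn
    rw [hqk] at hq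
    exact hq.2 this
end

section
/- The language L_AM = { a^n : q(n) is a power of 2 } is nonregular; equivalently, the set S = { n ∈ ℕ : q(n) is a power of 2 } is such that the characteristic sequence of S is not eventually periodic. -/
/-- A set of naturals is eventually periodic. -/
def EventuallyPeriodic (S : Set ℕ) : Prop :=
  ∃ N d : ℕ, 1 ≤ d ∧ ∀ n : ℕ, N ≤ n → (n ∈ S ↔ n + d ∈ S)

lemma leastNonDivisor_eq {n m : ℕ} (hm : 2 ≤ m)
    (hdvd : ∀ j, 2 ≤ j → j < m → j ∣ n) (hnd : ¬ m ∣ n) :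
    leastNonDivisor n = m := by
  unfold leastNonDivisor
  apply le_antisymm
  · apply Nat.sInf_le
    simp only [Set.mem_setOf_eq]
    exact ⟨hm, hnd⟩
  · have hne : {m : ℕ | 2 ≤ m ∧ ¬ m ∣ n}.Nonempty := ⟨m, hm, hnd⟩
    apply le_csInf hne
    intro j hj
    by_contra h
    push_neg at h
    exact hj.2 (hdvd j hj.1 h)

lemma periodic_iterate {S : Set ℕ} {N d : ℕ}
    (h : ∀ n : ℕ, N ≤ n → (n ∈ S ↔ n + d ∈ S))
    {a : ℕ} (ha : N ≤ a) (m : ℕ) : a ∈ S ↔ a + m * d ∈ S := by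
  induction m with
  | zero => simp
  | succ m ih =>
    have e : a + (m + 1) * d = a + m * d + d := by ring
    rw [e, ih, h (a + m * d) (le_trans ha (Nat.le_add_right _ _))]

theorem altMehlhorn_not_eventuallyPeriodic :
    ¬ EventuallyPeriodic {n : ℕ | 1 ≤ n ∧ ∃ k : ℕ, 1 ≤ k ∧ leastNonDivisor n = 2 ^ k} := by
  rintro ⟨N, d, hd, hper⟩
  obtain ⟨p, hpge, hp⟩ := Nat.exists_infinite_primes (N + d + 3)
  have hp1 : 1 ≤ p := by omega
  have hplt : p ≤ 2 ^ (p - 1) := by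
    have : p - 1 < 2 ^ (p - 1) := Nat.lt_two_pow_self
    omega
  -- M : product of odd numbers below 2^p
  set M : ℕ := ∏ i ∈ Finset.range (2 ^ (p - 1)), (2 * i + 1) with hMdef
  have hModd : Odd M := by
    refine Finset.prod_induction _ Odd (fun a b ha hb => ha.mul hb) odd_one ?_
    exact fun i _ => ⟨i, by ring⟩
  have hM2 : ¬ 2 ∣ M := by
    rw [← even_iff_two_dvd, Nat.not_even_iff_odd] at *
    exact hModd
  have hMpos : 1 ≤ M := by
    rcases hModd with ⟨j, hj⟩; omega
  set a : ℕ := 2 ^ (p - 1) * M with hadef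
  have hapos : 1 ≤ a := Nat.one_le_iff_ne_zero.2 (by positivity)
  have h2p : 2 ^ p = 2 ^ (p - 1) * 2 := by
    rw [← pow_succ]; congr 1; omega
  have haN : N ≤ a := by
    have : 2 ^ (p - 1) ≤ a := Nat.le_mul_of_pos_right _ hMpos
    omega
  -- every 1 ≤ m < 2^p divides a
  have hdvd_a : ∀ m : ℕ, 1 ≤ m → m < 2 ^ p → m ∣ a := by
    intro m h1 hlt
    have hm0 : m ≠ 0 := by omega
    have hproj : 2 ^ (m.factorization 2) ∣ m := Nat.ordProj_dvd m 2
    have hodd : ¬ 2 ∣ (m / 2 ^ (m.factorization 2)) :=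
      Nat.not_dvd_ordCompl Nat.prime_two hm0
    have hsplit : 2 ^ (m.factorization 2) * (m / 2 ^ (m.factorization 2)) = m :=
      Nat.ordProj_mul_ordCompl_eq_self m 2
    set e := m.factorization 2
    set m' := m / 2 ^ e with hm'def
    have hm'dvd : m' ∣ m := Nat.div_dvd_of_dvd hproj
    have hm'le : m' ≤ m := Nat.le_of_dvd (by omega) hm'dvd
    have hele : e ≤ p - 1 := by
      by_contra hcon
      push_neg at hcon
      have h1 : 2 ^ p ≤ 2 ^ e := Nat.pow_le_pow_right (by norm_num) (by omega)
      have h2 : 2 ^ e ≤ m := Nat.le_of_dvd (by omega) hproj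
      omega
    have hm'odd : m' % 2 = 1 := Nat.two_dvd_ne_zero.mp hodd
    have hi : m' / 2 < 2 ^ (p - 1) := by omega
    have hm'M : m' ∣ M := by
      have hmem : m' / 2 ∈ Finset.range (2 ^ (p - 1)) := Finset.mem_range.2 hi
      have := Finset.dvd_prod_of_mem (fun i => 2 * i + 1) hmem
      have he : 2 * (m' / 2) + 1 = m' := by omega
      simpa only [he] using this
    calc m = 2 ^ e * m' := hsplit.symm
      _ ∣ 2 ^ (p - 1) * M := mul_dvd_mul (pow_dvd_pow 2 hele) hm'M
  have h2pa : ¬ 2 ^ p ∣ a := by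
    intro hcon
    rw [h2p, hadef] at hcon
    have : 2 ∣ M := (Nat.mul_dvd_mul_iff_left (by positivity : 0 < 2 ^ (p - 1))).mp hcon
    exact hM2 this
  have hqa : leastNonDivisor a = 2 ^ p := by
    refine leastNonDivisor_eq ?_ (fun j h2 hlt => hdvd_a j (by omega) hlt) h2pa
    have : p - 1 < 2 ^ (p - 1) := Nat.lt_two_pow_self
    omega
  have haS : a ∈ {n : ℕ | 1 ≤ n ∧ ∃ k : ℕ, 1 ≤ k ∧ leastNonDivisor n = 2 ^ k} :=
    ⟨hapos, p, hp1, hqa⟩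
  -- b
  set b : ℕ := (a * p + 1) * Nat.factorial (p - 1) with hbdef
  have hFdvd : ∀ m : ℕ, 2 ≤ m → m < p → m ∣ b := by
    intro m h2 hlt
    exact Dvd.dvd.mul_left (Nat.dvd_factorial (by omega) (by omega)) _
  have hpb : ¬ p ∣ b := by
    intro hcon
    rcases (Nat.Prime.dvd_mul hp).mp hcon with h | h
    · have : p ∣ a * p := dvd_mul_left p a
      have : p ∣ 1 := (Nat.dvd_add_right this).mp h
      have := Nat.le_of_dvd one_pos this
      omega
    · have := (Nat.Prime.dvd_factorial hp).mp h
      omega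
  have hqb : leastNonDivisor b = p := leastNonDivisor_eq hp.two_le hFdvd hpb
  have hbnotS : b ∉ {n : ℕ | 1 ≤ n ∧ ∃ k : ℕ, 1 ≤ k ∧ leastNonDivisor n = 2 ^ k} := by
    rintro ⟨-, k, hk1, hqbk⟩
    rw [hqb] at hqbk
    have hpodd : p % 2 = 1 := by
      rcases Nat.Prime.eq_two_or_odd hp with h | h
      · omega
      · exact h
    have h2k : 2 ∣ 2 ^ k := dvd_pow_self 2 (by omega)
    omega
  -- d divides a and b
  have hda : d ∣ a := hdvd_a d hd (by omega)
  have hdb : d ∣ b := Dvd.dvd.mul_left (Nat.dvd_factorial (by omega) (by omega)) _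
  have hab : a ≤ b := by
    have h1 : 1 ≤ Nat.factorial (p - 1) := Nat.one_le_iff_ne_zero.2 (Nat.factorial_ne_zero _)
    calc a ≤ a * p + 1 := by nlinarith
      _ ≤ (a * p + 1) * Nat.factorial (p - 1) := Nat.le_mul_of_pos_right _ (by omega)
  have hdab : d ∣ b - a := Nat.dvd_sub hdb hda
  have key := periodic_iterate hper haN ((b - a) / d)
  have hbeq : a + (b - a) / d * d = b := by
    rw [Nat.div_mul_cancel hdab]
    omega
  rw [hbeq] at key
  exact hbnotS (key.mp haS)
end

section
/- Karp's theorem for unary languages: if S ⊆ ℕ is not eventually periodic, then for infinitely many n, any eventually periodic set T that agrees with S on {0, 1, ..., n} (i.e., m ∈ S ↔ m ∈ T for all m ≤ n) must have period-plus-preperiod at least (n+3)/2; equivalently, any DFA over a unary alphabet accepting exactly { a^m : m ∈ S, m ≤ n } among strings of length ≤ n has at least (n+3)/2 states. -/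
/-- A set of naturals is eventually periodic with preperiod `N` and period `d`. -/
def EvPeriodicWith (T : Set ℕ) (N d : ℕ) : Prop :=
  1 ≤ d ∧ ∀ n : ℕ, N ≤ n → (n ∈ T ↔ n + d ∈ T)

private lemma onePeriod (f : ℕ → Prop) (d a L : ℕ)
    (h1 : ∀ m, a ≤ m → m + d ≤ L → (f m ↔ f (m + d))) :
    ∀ t m, a ≤ m → m + t * d ≤ L → (f m ↔ f (m + t * d)) := by
  intro t
  induction t with
  | zero => intro m _ _; simp
  | succ t ih =>
    intro m hm hL
    rw [Nat.succ_mul] at hL ⊢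
    have e1 : f m ↔ f (m + d) := h1 m hm (by omega)
    have e2 := ih (m + d) (by omega) (by omega)
    rw [show m + d + t * d = m + (t * d + d) from by omega] at e2
    exact e1.trans e2

private lemma samePeriod (f : ℕ → Prop) (d a L : ℕ)
    (h1 : ∀ m, a ≤ m → m + d ≤ L → (f m ↔ f (m + d))) :
    ∀ m m', a ≤ m → m ≤ m' → m' ≤ L → d ∣ m' - m → (f m ↔ f m') := by
  intro m m' ham hmm' hm'L hdvd
  obtain ⟨t, ht⟩ := hdvd
  rw [mul_comm] at ht
  have hm' : m' = m + t * d := by omega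
  rw [hm']
  exact onePeriod f d a L h1 t m ham (by omega)

private lemma fwAux : ∀ p d d', d + d' ≤ p → 0 < d → 0 < d' → d ≤ d' →
    ∀ (f : ℕ → Prop) (a L : ℕ),
    (∀ m, a ≤ m → m + d ≤ L → (f m ↔ f (m + d))) →
    (∀ m, a ≤ m → m + d' ≤ L → (f m ↔ f (m + d'))) →
    a + d + d' ≤ L + 1 + Nat.gcd d d' →
    ∀ m m', a ≤ m → a ≤ m' → m ≤ L → m' ≤ L →
      m % Nat.gcd d d' = m' % Nat.gcd d d' → (f m ↔ f m') := by
  intro p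
  induction p with
  | zero => intro d d' hp hd; exact absurd hp (by omega)
  | succ p ih =>
    intro d d' hp hd hd' hdd f a L h1 h2 hcond m m' ham ham' hmL hm'L hmod
    rcases eq_or_lt_of_le hdd with heq | hlt
    · subst heq
      rw [Nat.gcd_self] at hmod
      rcases le_total m m' with h | h
      · exact samePeriod f d a L h1 m m' ham h hm'L ((Nat.modEq_iff_dvd' h).1 hmod)
      · exact (samePeriod f d a L h1 m' m ham' h hmL ((Nat.modEq_iff_dvd' h).1 hmod.symm)).symm
    · set g := Nat.gcd d d' with hgdef
      have hgd : g ∣ d := Nat.gcd_dvd_left _ _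
      have hgd' : g ∣ d' := Nat.gcd_dvd_right _ _
      have hg : 0 < g := Nat.gcd_pos_of_pos_left _ hd
      have hgled : g ≤ d := Nat.le_of_dvd hd hgd
      set d'' := d' - d with hd''def
      have hd''pos : 0 < d'' := by omega
      have hgd'' : g ∣ d'' := Nat.dvd_sub hgd' hgd
      have hgled'' : g ≤ d'' := Nat.le_of_dvd hd''pos hgd''
      have hgeq : Nat.gcd d d'' = g := by
        conv_rhs => rw [hgdef, show d' = d'' + d from by omega]
        rw [Nat.gcd_add_self_right]
      have hLad : a + d ≤ L := by omega
      have h2'' : ∀ k, a ≤ k → k + d'' ≤ L - d → (f k ↔ f (k + d'')) := by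
        intro k hk hkL
        have e1 := h2 k hk (by omega)
        have e2 := h1 (k + d'') (by omega) (by omega)
        rw [show k + d'' + d = k + d' from by omega] at e2
        exact e1.trans e2.symm
      have h1' : ∀ k, a ≤ k → k + d ≤ L - d → (f k ↔ f (k + d)) :=
        fun k hk hkL => h1 k hk (by omega)
      have reduce : ∀ k, a ≤ k → k ≤ L →
          ∃ k', a ≤ k' ∧ k' ≤ L - d ∧ k' % g = k % g ∧ (f k' ↔ f k) := by
        intro k hk hkL
        by_cases hk' : k ≤ L - d
        · exact ⟨k, hk, hk', rfl, Iff.rfl⟩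
        · have hka : a + d ≤ k := by omega
          refine ⟨k - d, by omega, by omega, ?_, ?_⟩
          · exact (Nat.modEq_iff_dvd' (Nat.sub_le _ _)).2
              (by rw [Nat.sub_sub_self (by omega : d ≤ k)]; exact hgd)
          · have hh := h1 (k - d) (by omega) (by omega)
            rw [show k - d + d = k from by omega] at hh
            exact hh
      obtain ⟨k1, hk1a, hk1L, hk1mod, hk1f⟩ := reduce m ham hmL
      obtain ⟨k2, hk2a, hk2L, hk2mod, hk2f⟩ := reduce m' ham' hm'L
      have hmod2 : k1 % g = k2 % g := by rw [hk1mod, hk2mod, hmod]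
      have hcond' : a + d + d'' ≤ (L - d) + 1 + g := by omega
      have key : f k1 ↔ f k2 := by
        rcases le_total d d'' with hord | hord
        · exact ih d d'' (by omega) hd hd''pos hord f a (L - d) h1' h2''
            (by rw [hgeq]; exact hcond') k1 k2 hk1a hk2a hk1L hk2L (by rw [hgeq]; exact hmod2)
        · exact ih d'' d (by omega) hd''pos hd hord f a (L - d) h2'' h1'
            (by rw [Nat.gcd_comm d'' d, hgeq]; omega) k1 k2 hk1a hk2a hk1L hk2L
            (by rw [Nat.gcd_comm d'' d, hgeq]; exact hmod2)
      exact (hk1f.symm.trans key).trans hk2f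

private lemma fw (d d' : ℕ) (hd : 0 < d) (hd' : 0 < d') (f : ℕ → Prop) (a L : ℕ)
    (h1 : ∀ m, a ≤ m → m + d ≤ L → (f m ↔ f (m + d)))
    (h2 : ∀ m, a ≤ m → m + d' ≤ L → (f m ↔ f (m + d')))
    (hcond : a + d + d' ≤ L + 1 + Nat.gcd d d') :
    ∀ m m', a ≤ m → a ≤ m' → m ≤ L → m' ≤ L →
      m % Nat.gcd d d' = m' % Nat.gcd d d' → (f m ↔ f m') := by
  rcases le_total d d' with h | h
  · exact fwAux (d + d') d d' le_rfl hd hd' h f a L h1 h2 hcond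
  · intro m m' ham ham' hmL hm'L hmod
    exact fwAux (d + d') d' d (by omega) hd' hd h f a L h2 h1
      (by rw [Nat.gcd_comm d' d]; omega) m m' ham ham' hmL hm'L
      (by rw [Nat.gcd_comm d' d]; exact hmod)

theorem karp_unary (S : Set ℕ) (hS : ¬ ∃ N d : ℕ, EvPeriodicWith S N d) :
    ∀ M : ℕ, ∃ n : ℕ, M ≤ n ∧ ∀ (T : Set ℕ) (N d : ℕ), EvPeriodicWith T N d →
      (∀ m : ℕ, m ≤ n → (m ∈ S ↔ m ∈ T)) → ((n : ℝ) + 3) / 2 ≤ N + d := by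
  classical
  by_contra hcon
  push_neg at hcon
  obtain ⟨M, hM⟩ := hcon
  have hS' : ∀ N d : ℕ, 0 < d → ∃ m, N ≤ m ∧ ¬ (m ∈ S ↔ m + d ∈ S) := by
    intro N d hd
    by_contra hc
    push_neg at hc
    exact hS ⟨N, d, hd, fun m hm => hc m hm⟩
  have H : ∀ n, M ≤ n → ∃ N d, 0 < d ∧ 2 * (N + d) ≤ n + 2 ∧
      (∀ m, N ≤ m → m + d ≤ n → (m ∈ S ↔ m + d ∈ S)) := by
    intro n hn
    obtain ⟨T, N, d, ⟨hd, hTper⟩, hagree, hlt⟩ := hM n hn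
    refine ⟨N, d, hd, ?_, ?_⟩
    · have hR : ((2 * (N + d) : ℕ) : ℝ) < ((n + 3 : ℕ) : ℝ) := by push_cast; linarith
      have := (Nat.cast_lt (α := ℝ)).mp hR
      omega
    · intro m hm hmd
      rw [hagree m (by omega), hagree (m + d) hmd]
      exact hTper m hm
  obtain ⟨N₀, d₀, hd₀, hb₀, hp₀⟩ := H M le_rfl
  have hex : ∃ k, ¬ (∀ m, N₀ ≤ m → m + d₀ ≤ k → (m ∈ S ↔ m + d₀ ∈ S)) := by
    obtain ⟨w, hw1, hw2⟩ := hS' N₀ d₀ hd₀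
    exact ⟨w + d₀, fun hP => hw2 (hP w hw1 le_rfl)⟩
  set K := Nat.find hex with hKdef
  have hKspec : ¬ (∀ m, N₀ ≤ m → m + d₀ ≤ K → (m ∈ S ↔ m + d₀ ∈ S)) := Nat.find_spec hex
  have hKmin : ∀ k, k < K → ∀ m, N₀ ≤ m → m + d₀ ≤ k → (m ∈ S ↔ m + d₀ ∈ S) := by
    intro k hk
    exact not_not.mp (Nat.find_min hex hk)
  have hMK : M < K := by
    by_contra hc
    push_neg at hc
    exact hKspec (fun m hm hmd => hp₀ m hm (hmd.trans hc))
  set n := K - 1 with hn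
  have hKn : K = n + 1 := by omega
  have hMn : M ≤ n := by omega
  have hPn : ∀ m, N₀ ≤ m → m + d₀ ≤ n → (m ∈ S ↔ m + d₀ ∈ S) := hKmin n (by omega)
  have hnotP : ¬ (∀ m, N₀ ≤ m → m + d₀ ≤ n + 1 → (m ∈ S ↔ m + d₀ ∈ S)) := by
    rw [← hKn]; exact hKspec
  push_neg at hnotP
  obtain ⟨w, hw1, hw2, hw3⟩ := hnotP
  have hw3' : ¬ (w ∈ S ↔ w + d₀ ∈ S) := by tauto
  have hwn : w + d₀ = n + 1 := by
    by_contra hc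
    exact hw3' (hPn w hw1 (by omega))
  obtain ⟨N, d, hd, hb, hp⟩ := H (n + 1) (by omega)
  have hb₀' : 2 * (N₀ + d₀) ≤ n + 2 := by omega
  have hsum : N + N₀ + d + d₀ ≤ n + 2 := by omega
  set g := Nat.gcd d d₀ with hgdef
  have hg : 0 < g := Nat.gcd_pos_of_pos_left _ hd
  set a := max N N₀ with ha
  have haN : N ≤ a := le_max_left _ _
  have haN₀ : N₀ ≤ a := le_max_right _ _
  have haub : a ≤ N + N₀ := max_le (Nat.le_add_right _ _) (Nat.le_add_left _ _)
  have h1 : ∀ m, a ≤ m → m + d ≤ n → (m ∈ S ↔ m + d ∈ S) :=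
    fun m hm hmd => hp m (le_trans haN hm) (by omega)
  have h2 : ∀ m, a ≤ m → m + d₀ ≤ n → (m ∈ S ↔ m + d₀ ∈ S) :=
    fun m hm hmd => hPn m (le_trans haN₀ hm) hmd
  have hcond2 : a + d + d₀ ≤ n + 1 + g := by omega
  have hm₁ : n + 1 - d + d = n + 1 := by omega
  have hmodeq : (n + 1 - d) % g = w % g := by
    have e1 : d ≡ 0 [MOD g] := (Nat.modEq_zero_iff_dvd).2 (Nat.gcd_dvd_left _ _)
    have e2 : d₀ ≡ 0 [MOD g] := (Nat.modEq_zero_iff_dvd).2 (Nat.gcd_dvd_right _ _)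
    have h3 : (n + 1 - d) + d ≡ w + d₀ [MOD g] := by rw [hm₁, hwn]
    exact Nat.ModEq.add_right_cancel (e1.trans e2.symm) h3
  have hFW := fw d d₀ hd hd₀ (· ∈ S) a n h1 h2 hcond2 (n + 1 - d) w
      (by omega) (by omega) (by omega) (by omega) hmodeq
  have hstep : ((n + 1 - d) ∈ S) ↔ ((n + 1) ∈ S) := by
    have hh := hp (n + 1 - d) (by omega) (by omega)
    rwa [hm₁] at hh
  apply hw3'
  rw [hwn]
  exact hFW.symm.trans hstep
end

section
/- For every n ≥ 1: n ∈ L_AM-complement (i.e., q(n) is not a power of 2) implies there exist s, t with 2^s < t < 2^(s+1), t = q(n), 2^s | n, and t ∤ n; moreover in that case t = q(n) ≤ C·log n for an absolute constant C and sufficiently large n. -/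
lemma lnd_mem {n : ℕ} (hn : 1 ≤ n) :
    2 ≤ leastNonDivisor n ∧ ¬ leastNonDivisor n ∣ n := by
  have hmem : (n + 1) ∈ {m : ℕ | 2 ≤ m ∧ ¬ m ∣ n} := by
    refine ⟨by omega, fun h => ?_⟩
    have := Nat.le_of_dvd (by omega) h
    omega
  exact Nat.sInf_mem ⟨_, hmem⟩

lemma lnd_min {n m : ℕ} (h2 : 2 ≤ m) (hm : m < leastNonDivisor n) : m ∣ n := by
  by_contra h
  have : leastNonDivisor n ≤ m := Nat.sInf_le ⟨h2, h⟩
  omega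

theorem complement_LAM_characterization :
    (∀ n : ℕ, 1 ≤ n → (¬ ∃ k : ℕ, 1 ≤ k ∧ leastNonDivisor n = 2 ^ k) →
      ∃ s t : ℕ, 1 ≤ s ∧ 2 ^ s < t ∧ t < 2 ^ (s + 1) ∧ t = leastNonDivisor n ∧
        2 ^ s ∣ n ∧ ¬ t ∣ n) ∧
    ∃ C : ℝ, 0 < C ∧ ∃ N : ℕ, ∀ n : ℕ, N ≤ n →
      (¬ ∃ k : ℕ, 1 ≤ k ∧ leastNonDivisor n = 2 ^ k) →
      (leastNonDivisor n : ℝ) ≤ C * Real.log n := by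
  constructor
  · intro n hn hpow
    obtain ⟨hq2, hqnd⟩ := lnd_mem hn
    set q := leastNonDivisor n with hqdef
    have hq3 : 3 ≤ q := by
      rcases Nat.lt_or_ge q 3 with h | h
      · interval_cases q
        · exact absurd ⟨1, le_refl 1, by norm_num⟩ hpow
      · exact h
    set s := Nat.log 2 q with hs
    have h1 : 2 ^ s ≤ q := Nat.pow_log_le_self 2 (by omega)
    have h2 : q < 2 ^ (s + 1) := Nat.lt_pow_succ_log_self one_lt_two q
    have hs1 : 1 ≤ s := by
      by_contra h
      have : s = 0 := by omega
      rw [this] at h2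
      norm_num at h2
      omega
    have hne : 2 ^ s ≠ q := fun h => hpow ⟨s, hs1, h.symm⟩
    have hlt : 2 ^ s < q := lt_of_le_of_ne h1 hne
    exact ⟨s, q, hs1, hlt, h2, rfl, lnd_min (Nat.one_lt_two_pow_iff.mpr (by omega)) hlt, hqnd⟩
  · refine ⟨4 / Real.log 2, by positivity, 2, fun n hn hpow => ?_⟩
    have hn1 : 1 ≤ n := by omega
    obtain ⟨hq2, hqnd⟩ := lnd_mem hn1
    set q := leastNonDivisor n with hqdef
    have hq3 : 3 ≤ q := by
      rcases Nat.lt_or_ge q 3 with h | h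
      · interval_cases q
        · exact absurd ⟨1, le_refl 1, by norm_num⟩ hpow
      · exact h
    set h := (q - 1) / 2 with hh
    have hh1 : 1 ≤ h := by omega
    have h2h : 2 * h ≤ q - 1 := by omega
    -- the central binomial coefficient divides n
    have hB : Nat.centralBinom h ∣ n := by
      rw [← Nat.factorization_le_iff_dvd (Nat.centralBinom_ne_zero h) (by omega)]
      intro p
      by_cases hv : (Nat.centralBinom h).factorization p = 0
      · simp [hv]
      have hp : p.Prime :=
        Not.imp_symm (Nat.centralBinom h).factorization_eq_zero_of_not_prime hv
      set v := (Nat.centralBinom h).factorization p with hvdef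
      have hple : p ^ v ≤ 2 * h := by
        rw [hvdef, Nat.centralBinom]
        exact Nat.pow_factorization_choose_le (by omega)
      have hp2 : 2 ≤ p ^ v := by
        calc 2 ≤ p := hp.two_le
        _ ≤ p ^ v := Nat.le_self_pow hv p
      have hdvd : p ^ v ∣ n := lnd_min hp2 (by omega)
      exact (Nat.Prime.pow_dvd_iff_le_factorization hp (by omega)).mp hdvd
    have hBn : Nat.centralBinom h ≤ n := Nat.le_of_dvd (by omega) hB
    have hq1n : q - 1 ≤ n := Nat.le_of_dvd (by omega) (lnd_min (by omega) (by omega))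
    have key : 4 ^ h ≤ n ^ 2 := by
      calc 4 ^ h ≤ 2 * h * Nat.centralBinom h :=
            Nat.four_pow_le_two_mul_self_mul_centralBinom h (by omega)
        _ ≤ n * n := Nat.mul_le_mul (by omega) hBn
        _ = n ^ 2 := (sq n).symm
    -- pass to reals
    have keyR : (4 : ℝ) ^ h ≤ (n : ℝ) ^ 2 := by
      exact_mod_cast key
    have hlog : (h : ℝ) * Real.log 4 ≤ 2 * Real.log n := by
      have := Real.log_le_log (by positivity) keyR
      rwa [Real.log_pow, Real.log_pow, Nat.cast_ofNat] at this
    have h4 : Real.log 4 = 2 * Real.log 2 := by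
      rw [show (4 : ℝ) = 2 ^ 2 by norm_num, Real.log_pow]
      push_cast; ring
    have hlog2 : (h : ℝ) * Real.log 2 ≤ Real.log n := by nlinarith [Real.log_pos one_lt_two]
    have hq4h : (q : ℝ) ≤ 4 * h := by
      have : q ≤ 4 * h := by omega
      exact_mod_cast this
    have hl2 : (0 : ℝ) < Real.log 2 := Real.log_pos one_lt_two
    calc (q : ℝ) ≤ 4 * h := hq4h
      _ ≤ 4 * (Real.log n / Real.log 2) := by
          have : (h : ℝ) ≤ Real.log n / Real.log 2 := (le_div_iff₀ hl2).mpr hlog2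
          linarith
      _ = 4 / Real.log 2 * Real.log n := by ring
end

section
/- The set { n ∈ ℕ : q(n) is NOT a power of 2 } (complement of the Alt–Mehlhorn set) is not eventually periodic. -/
lemma lnd_eq (n v : ℕ) (h2 : 2 ≤ v) (hnd : ¬ v ∣ n)
    (hall : ∀ m, 2 ≤ m → m < v → m ∣ n) : leastNonDivisor n = v := by
  have hne : {m : ℕ | 2 ≤ m ∧ ¬ m ∣ n}.Nonempty := ⟨v, h2, hnd⟩
  have hmem := Nat.sInf_mem hne
  have hle : sInf {m : ℕ | 2 ≤ m ∧ ¬ m ∣ n} ≤ v := Nat.sInf_le ⟨h2, hnd⟩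
  unfold leastNonDivisor
  rcases lt_or_eq_of_le hle with h | h
  · exact absurd (hall _ hmem.1 h) hmem.2
  · exact h

lemma oddW (M : ℕ) : ¬ 2 ∣ ∏ j ∈ Finset.range M, (2 * j + 1) := by
  induction M with
  | zero => simp
  | succ M ih =>
    rw [Finset.prod_range_succ]
    intro h
    rcases (Nat.Prime.dvd_mul Nat.prime_two).mp h with h | h
    · exact ih h
    · omega

theorem complement_altMehlhorn_not_eventuallyPeriodic :
    ¬ EventuallyPeriodic {n : ℕ | 1 ≤ n ∧ ¬ ∃ k : ℕ, 1 ≤ k ∧ leastNonDivisor n = 2 ^ k} := by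
  rintro ⟨N, d, hd, hper⟩
  set S := {n : ℕ | 1 ≤ n ∧ ¬ ∃ k : ℕ, 1 ≤ k ∧ leastNonDivisor n = 2 ^ k} with hSdef
  -- propagate periodicity
  have hprop : ∀ j n, N ≤ n → (n ∈ S ↔ n + j * d ∈ S) := by
    intro j
    induction j with
    | zero => intro n _; simp
    | succ j ih =>
      intro n hn
      have h1 := ih n hn
      have h2 := hper (n + j * d) (le_trans hn (Nat.le_add_right _ _))
      have h3 : n + (j + 1) * d = n + j * d + d := by ring
      rw [h3]
      exact h1.trans h2
  -- choose a big odd prime p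
  obtain ⟨p, hpge, hp⟩ := Nat.exists_infinite_primes (N + d + 3)
  have hp2 : 2 ≤ p := hp.two_le
  have hpodd : ¬ 2 ∣ p := by
    intro h
    have : 2 = p := (Nat.prime_dvd_prime_iff_eq Nat.prime_two hp).mp h
    omega
  -- the element in S
  set n₁ := d * Nat.factorial (p - 1) with hn1
  have hlnd1 : leastNonDivisor n₁ = p := by
    apply lnd_eq _ _ hp2
    · intro h
      rcases (Nat.Prime.dvd_mul hp).mp h with h | h
      · have := Nat.le_of_dvd (by omega) h
        omega
      · have := (Nat.Prime.dvd_factorial hp).mp h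
        omega
    · intro m hm2 hmp
      exact Dvd.dvd.mul_left (Nat.dvd_factorial (by omega) (by omega)) d
  have hfac1 : 1 ≤ Nat.factorial (p - 1) := Nat.factorial_pos _
  have hfacge : p - 1 ≤ Nat.factorial (p - 1) := Nat.self_le_factorial _
  have hN1 : N ≤ n₁ := by
    have : p - 1 ≤ n₁ := le_trans hfacge (Nat.le_mul_of_pos_left _ (by omega))
    omega
  have hS1 : n₁ ∈ S := by
    constructor
    · have : 1 * 1 ≤ d * Nat.factorial (p - 1) := Nat.mul_le_mul hd hfac1
      simpa [hn1] using this
    · rintro ⟨k, hk, heq⟩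
      rw [hlnd1] at heq
      have : 2 ∣ 2 ^ k := dvd_pow_self 2 (by omega)
      rw [← heq] at this
      exact hpodd this
  -- the element not in S
  set M := max d N with hM
  set a := d.factorization 2 with ha
  set u := d / 2 ^ a with hu
  have hd0 : d ≠ 0 := by omega
  have hdu : 2 ^ a * u = d := Nat.ordProj_mul_ordCompl_eq_self d 2
  have huodd : ¬ 2 ∣ u := Nat.not_dvd_ordCompl Nat.prime_two hd0
  have hupos : 0 < u := Nat.ordCompl_pos 2 hd0
  have h2ad : 2 ^ a ≤ d := Nat.ordProj_le 2 hd0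
  have haM : a ≤ M := by
    have h1 : a < 2 ^ a := Nat.lt_two_pow_self
    have h2 : d ≤ M := le_max_left _ _
    omega
  set W := ∏ j ∈ Finset.range (2 ^ (M + 1)), (2 * j + 1) with hW
  have hWodd : ¬ 2 ∣ W := oddW _
  have hWpos : 0 < W := Finset.prod_pos (fun j _ => by omega)
  set n₂ := 2 ^ M * (u * W) with hn2
  have hlnd2 : leastNonDivisor n₂ = 2 ^ (M + 1) := by
    apply lnd_eq
    · have : (2:ℕ) ^ 1 ≤ 2 ^ (M + 1) := Nat.pow_le_pow_right (by omega) (by omega)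
      omega
    · intro h
      have h2K : (2:ℕ) ^ (M + 1) = 2 ^ M * 2 := by ring
      rw [h2K] at h
      have h2uW : 2 ∣ u * W := (Nat.mul_dvd_mul_iff_left (Nat.pow_pos (n := M) (by omega))).mp h
      rcases (Nat.Prime.dvd_mul Nat.prime_two).mp h2uW with h | h
      · exact huodd h
      · exact hWodd h
    · intro m hm2 hmlt
      set b := m.factorization 2 with hb
      set c := m / 2 ^ b with hc
      have hm0 : m ≠ 0 := by omega
      have hmbc : 2 ^ b * c = m := Nat.ordProj_mul_ordCompl_eq_self m 2
      have hcodd : ¬ 2 ∣ c := Nat.not_dvd_ordCompl Nat.prime_two hm0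
      have hble : 2 ^ b ≤ m := Nat.ordProj_le 2 hm0
      have hbM : b ≤ M := by
        have : (2:ℕ) ^ b < 2 ^ (M + 1) := lt_of_le_of_lt hble hmlt
        have := (Nat.pow_lt_pow_iff_right (a := 2) (by omega)).mp this
        omega
      have hcle : c ≤ m := Nat.ordCompl_le m 2
      have hcm1 : c % 2 = 1 := by
        rcases Nat.mod_two_eq_zero_or_one c with h | h
        · exact absurd (Nat.dvd_of_mod_eq_zero h) hcodd
        · exact h
      have hjlt : c / 2 < 2 ^ (M + 1) := by omega
      have hcW : c ∣ W := by
        have h := Finset.dvd_prod_of_mem (fun j => 2 * j + 1)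
          (Finset.mem_range.mpr hjlt)
        try simp only at h
        have hceq : 2 * (c / 2) + 1 = c := by omega
        rwa [hceq] at h
      calc m = 2 ^ b * c := hmbc.symm
        _ ∣ 2 ^ M * (u * W) := mul_dvd_mul (pow_dvd_pow 2 hbM) (Dvd.dvd.mul_left hcW u)
  have hdn2 : d ∣ n₂ := by
    calc d = 2 ^ a * u := hdu.symm
      _ ∣ 2 ^ M * (u * W) := mul_dvd_mul (pow_dvd_pow 2 haM) (dvd_mul_right u W)
  have hN2 : N ≤ n₂ := by
    have h1 : M < 2 ^ M := Nat.lt_two_pow_self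
    have h2 : 2 ^ M ≤ n₂ := Nat.le_mul_of_pos_right _ (Nat.mul_pos hupos hWpos)
    have h3 : N ≤ M := le_max_right _ _
    omega
  have hS2 : n₂ ∉ S := by
    intro hmem
    exact hmem.2 ⟨M + 1, by omega, hlnd2⟩
  have hdn1 : d ∣ n₁ := dvd_mul_right d _
  rcases le_total n₁ n₂ with hle | hle
  · obtain ⟨j, hj⟩ := Nat.dvd_sub hdn2 hdn1
    have heq : n₂ = n₁ + j * d := by rw [Nat.mul_comm j d]; omega
    exact hS2 (heq ▸ (hprop j n₁ hN1).mp hS1)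
  · obtain ⟨j, hj⟩ := Nat.dvd_sub hdn1 hdn2
    have heq : n₁ = n₂ + j * d := by rw [Nat.mul_comm j d]; omega
    exact hS2 ((hprop j n₂ hN2).mpr (heq ▸ hS1))
end
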